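/- arXiv:1810.07981 — 5 statements merged into one kernel-verified Lean document; each statement's English description precedes it below -/
import Mathlib

section
/- Let (X, 𝒜, μ) be a measure space and 0 < T ≤ ∞. Suppose v : (0,T) → L²(X,μ;ℝ) is differentiable (with respect to the L²-norm) at every t ∈ (0,T) with derivative v'(t), that ⟨v'(t), (v(t))⁻⟩ ≥ 0 for every t ∈ (0,T), and that ‖(v(t))⁻‖₂ → 0 as t → 0⁺. Then for every t ∈ (0,T) one has (v(t))⁻ = 0 in L², i.e. v(t) ≥ 0 μ-almost everywhere. -/
open MeasureTheory Filter Topology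
open scoped ENNReal

section Aux

variable {X : Type*} [MeasurableSpace X] {μ : Measure X}

private lemma key_norm (a b : Lp ℝ 2 μ) : ‖a⁻‖ ≤ ‖b⁻ - (a - b)‖ := by
  apply norm_le_norm_of_abs_le_abs
  rw [← Lp.coeFn_le]
  have hna : (a⁻ : Lp ℝ 2 μ) = -a ⊔ 0 := negPart_def a
  have hnb : (b⁻ : Lp ℝ 2 μ) = -b ⊔ 0 := negPart_def b
  rw [hna, hnb]
  filter_upwards [Lp.coeFn_abs (-a ⊔ 0), Lp.coeFn_abs ((-b ⊔ 0) - (a - b)),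
    Lp.coeFn_sub ((-b ⊔ 0)) (a - b), Lp.coeFn_sub a b,
    Lp.coeFn_sup (-a) (0 : Lp ℝ 2 μ), Lp.coeFn_sup (-b) (0 : Lp ℝ 2 μ),
    Lp.coeFn_neg a, Lp.coeFn_neg b, Lp.coeFn_zero ℝ 2 μ]
    with x h1 h2 h3 h4 h5 h6 h7 h8 h9
  rw [h1, h2]
  simp only [h3, h4, h5, h6, h7, h8, h9, Pi.sub_apply, Pi.sup_apply, Pi.neg_apply,
    Pi.zero_apply]
  set A := a x
  set B := b x
  have hX : -A ≤ (-B) ⊔ (0:ℝ) - (A - B) := by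
    have h := le_sup_left (a := -B) (b := (0:ℝ))
    linarith
  have h0 : (0:ℝ) ≤ |(-B) ⊔ (0:ℝ) - (A - B)| := abs_nonneg _
  rw [abs_of_nonneg (le_sup_right : (0:ℝ) ≤ (-A) ⊔ 0)]
  exact sup_le (hX.trans (le_abs_self _)) h0

private lemma key_sq (a b : Lp ℝ 2 μ) :
    ‖a⁻‖ ^ 2 ≤ ‖b⁻‖ ^ 2 - 2 * (inner ℝ (a - b) (b⁻) : ℝ) + ‖a - b‖ ^ 2 := by
  have h : ‖a⁻‖ ^ 2 ≤ ‖b⁻ - (a - b)‖ ^ 2 :=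
    pow_le_pow_left₀ (norm_nonneg _) (key_norm a b) 2
  rw [norm_sub_sq_real, real_inner_comm] at h
  exact h

end Aux

/-- analytic core of the parabolic maximum principle.
If `v : (0,T) → L²(X,μ;ℝ)` is differentiable at every `t ∈ (0,T)` with derivative `v' t`,
`⟨v' t, (v t)⁻⟩ ≥ 0` on `(0,T)`, and `‖(v t)⁻‖ → 0` as `t → 0⁺`, then `(v t)⁻ = 0`,
i.e. `v t ≥ 0` μ-a.e., for every `t ∈ (0,T)`. -/
theorem stmt1
    {X : Type*} [MeasurableSpace X] (μ : Measure X)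
    (T : ℝ≥0∞) (hT : 0 < T)
    (v v' : ℝ → Lp ℝ 2 μ)
    (hderiv : ∀ t : ℝ, 0 < t → ENNReal.ofReal t < T →
      Tendsto (fun h : ℝ => h⁻¹ • (v (t + h) - v t)) (𝓝[≠] (0:ℝ)) (𝓝 (v' t)))
    (hpos : ∀ t : ℝ, 0 < t → ENNReal.ofReal t < T → 0 ≤ (inner ℝ (v' t) ((v t)⁻) : ℝ))
    (hzero : Tendsto (fun t : ℝ => ‖(v t)⁻‖) (𝓝[>] (0:ℝ)) (𝓝 0)) :
    ∀ t : ℝ, 0 < t → ENNReal.ofReal t < T → (v t)⁻ = 0 := by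
  -- the squared norm of the negative part
  set φ : ℝ → ℝ := fun s => ‖(v s)⁻‖ ^ 2 with hφ
  -- continuity of `v` on `(0, T)`
  have vcont : ∀ s : ℝ, 0 < s → ENNReal.ofReal s < T → ContinuousAt v s := by
    intro s hs hsT
    have hd := hderiv s hs hsT
    have h1 : Tendsto (fun h : ℝ => h • (h⁻¹ • (v (s + h) - v s))) (𝓝[≠] (0:ℝ))
        (𝓝 ((0:ℝ) • v' s)) :=
      (tendsto_id.mono_left nhdsWithin_le_nhds).smul hd
    rw [zero_smul] at h1
    have h2 : Tendsto (fun h : ℝ => v (s + h) - v s) (𝓝[≠] (0:ℝ)) (𝓝 0) := by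
      apply h1.congr'
      filter_upwards [self_mem_nhdsWithin] with h hh
      rw [smul_inv_smul₀ hh]
    have h3 : Tendsto (fun h : ℝ => v (s + h) - v s) (pure (0:ℝ)) (𝓝 0) := by
      refine tendsto_pure_left.mpr fun u hu => ?_
      have : v (s + 0) - v s = 0 := by rw [add_zero, sub_self]
      rw [this]
      exact mem_of_mem_nhds hu
    have h4 : Tendsto (fun h : ℝ => v (s + h) - v s) (𝓝 (0:ℝ)) (𝓝 0) := by
      rw [← nhdsNE_sup_pure, tendsto_sup]
      exact ⟨h2, h3⟩
    have h5 : Tendsto (fun h : ℝ => v (s + h)) (𝓝 (0:ℝ)) (𝓝 (v s)) := by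
      have h := h4.add (tendsto_const_nhds (x := v s))
      rw [zero_add] at h
      exact h.congr fun z => by rw [sub_add_cancel]
    have h6 : Tendsto (fun z : ℝ => z - s) (𝓝 s) (𝓝 (0:ℝ)) := by
      have : Tendsto (fun z : ℝ => z - s) (𝓝 s) (𝓝 (s - s)) :=
        (continuous_id.sub continuous_const).continuousAt
      simpa using this
    have h7 := h5.comp h6
    have : ∀ z : ℝ, v (s + (z - s)) = v z := fun z => by ring_nf
    refine Tendsto.congr (fun z => ?_) h7
    simp only [Function.comp]
    rw [this z]
  -- continuity of φ on (0, T)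
  have φcont : ∀ s : ℝ, 0 < s → ENNReal.ofReal s < T → ContinuousAt φ s := by
    intro s hs hsT
    exact (((continuous_norm.comp continuous_negPart).pow 2).continuousAt).comp
      (vcont s hs hsT)
  -- the main bound: for every ε > 0 and t in (0,T), φ t ≤ ε + ε * t
  intro t ht htT
  have hmain : ∀ ε : ℝ, 0 < ε → φ t ≤ ε + ε * t := by
    intro ε hε
    -- choose a small starting point a with φ a < ε
    have hz2 : Tendsto (fun s : ℝ => ‖(v s)⁻‖ ^ 2) (𝓝[>] (0:ℝ)) (𝓝 ((0:ℝ) ^ 2)) :=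
      hzero.pow 2
    rw [show ((0:ℝ) ^ 2) = 0 by norm_num] at hz2
    have hev : ∀ᶠ s in 𝓝[>] (0:ℝ), φ s < ε := hz2.eventually_lt_const hε
    have hIoo : Set.Ioo (0:ℝ) t ∈ 𝓝[>] (0:ℝ) := Ioo_mem_nhdsGT_of_mem ⟨le_refl 0, ht⟩
    obtain ⟨a, hφa, ha0, hat⟩ := (hev.and (eventually_of_mem hIoo fun s hs => hs)).exists
    -- every point of [a, t] is in (0, T)
    have hin : ∀ x : ℝ, x ∈ Set.Icc a t → 0 < x ∧ ENNReal.ofReal x < T := by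
      intro x hx
      exact ⟨lt_of_lt_of_le ha0 hx.1,
        lt_of_le_of_lt (ENNReal.ofReal_le_ofReal hx.2) htT⟩
    -- apply the fencing theorem with B x = φ a + ε * (x - a)
    have happ := image_le_of_liminf_slope_right_le_deriv_boundary
      (f := φ) (a := a) (b := t)
      (B := fun x => φ a + ε * (x - a)) (B' := fun _ => ε)
      (fun x hx => ((φcont x (hin x hx).1 (hin x hx).2).continuousWithinAt))
      (by simp)
      (by fun_prop)
      (fun x _ => ((hasDerivAt_const x (φ a)).add
        (((hasDerivAt_id x).sub_const a).const_mul ε)).hasDerivWithinAt.congr_deriv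
        (by ring))
      ?_
    · have h := happ (Set.right_mem_Icc.mpr hat.le)
      have : ε * (t - a) ≤ ε * t := by nlinarith [ha0, hε]
      linarith [hφa.le, h]
    · -- the slope bound
      intro x hx r hr
      have hx0 : 0 < x := lt_of_lt_of_le ha0 hx.1
      have hxT : ENNReal.ofReal x < T :=
        lt_of_le_of_lt (ENNReal.ofReal_le_ofReal hx.2.le) htT
      -- the difference quotient tends to v' x from the right
      have hmap : Tendsto (fun z : ℝ => z - x) (𝓝[>] x) (𝓝[≠] (0:ℝ)) := by
        apply tendsto_nhdsWithin_of_tendsto_nhds_of_eventually_within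
        · have : Tendsto (fun z : ℝ => z - x) (𝓝 x) (𝓝 (x - x)) :=
            (continuous_id.sub continuous_const).continuousAt
          rw [sub_self] at this
          exact this.mono_left nhdsWithin_le_nhds
        · filter_upwards [self_mem_nhdsWithin] with z hz
          exact sub_ne_zero.mpr (ne_of_gt hz)
      have hd : Tendsto (fun z : ℝ => (z - x)⁻¹ • (v z - v x)) (𝓝[>] x) (𝓝 (v' x)) := by
        have := (hderiv x hx0 hxT).comp hmap
        refine this.congr fun z => ?_
        simp only [Function.comp]
        congr 2
        ring_nf
      -- z - x → 0
      have hsub : Tendsto (fun z : ℝ => z - x) (𝓝[>] x) (𝓝 (0:ℝ)) := by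
        have : Tendsto (fun z : ℝ => z - x) (𝓝 x) (𝓝 (x - x)) :=
          (continuous_id.sub continuous_const).continuousAt
        rw [sub_self] at this
        exact this.mono_left nhdsWithin_le_nhds
      -- the majorizing function F
      have hF : Tendsto
          (fun z : ℝ => -2 * (inner ℝ ((z - x)⁻¹ • (v z - v x)) ((v x)⁻) : ℝ)
            + (z - x) * ‖(z - x)⁻¹ • (v z - v x)‖ ^ 2)
          (𝓝[>] x)
          (𝓝 (-2 * (inner ℝ (v' x) ((v x)⁻) : ℝ) + 0 * ‖v' x‖ ^ 2)) := by
        exact ((tendsto_const_nhds).mul (hd.inner tendsto_const_nhds)).add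
          (hsub.mul ((hd.norm).pow 2))
      have hLr : -2 * (inner ℝ (v' x) ((v x)⁻) : ℝ) + 0 * ‖v' x‖ ^ 2 < r := by
        have := hpos x hx0 hxT
        nlinarith [hr, hε]
      have hFr := hF.eventually_lt_const hLr
      have : ∀ᶠ z in 𝓝[>] x, slope φ x z < r := by
        filter_upwards [self_mem_nhdsWithin, hFr] with z hz hFz
        have hzx : (0:ℝ) < z - x := sub_pos.mpr hz
        have hk := key_sq (v z) (v x)
        have hslope : slope φ x z ≤
            -2 * (inner ℝ ((z - x)⁻¹ • (v z - v x)) ((v x)⁻) : ℝ)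
              + (z - x) * ‖(z - x)⁻¹ • (v z - v x)‖ ^ 2 := by
          rw [slope_def_field]
          rw [div_le_iff₀ hzx]
          rw [real_inner_smul_left, norm_smul, mul_pow]
          have hφz : φ z - φ x ≤ -2 * (inner ℝ (v z - v x) ((v x)⁻) : ℝ)
              + ‖v z - v x‖ ^ 2 := by
            simp only [hφ]
            linarith [hk]
          calc φ z - φ x ≤ -2 * (inner ℝ (v z - v x) ((v x)⁻) : ℝ) + ‖v z - v x‖ ^ 2 := hφz
            _ = (-2 * ((z - x)⁻¹ * (inner ℝ (v z - v x) ((v x)⁻) : ℝ))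
                + (z - x) * (‖(z - x)⁻¹‖ ^ 2 * ‖v z - v x‖ ^ 2)) * (z - x) := by
              rw [Real.norm_eq_abs, sq_abs]
              field_simp
        exact lt_of_le_of_lt hslope hFz
      exact this.frequently
  -- conclude φ t ≤ 0 and finish
  have hφt0 : φ t ≤ 0 := by
    refine le_of_forall_pos_le_add fun δ hδ => ?_
    have h1t : (0:ℝ) < 1 + t := by linarith
    have := hmain (δ / (1 + t)) (by positivity)
    rw [zero_add]
    calc φ t ≤ δ / (1 + t) + δ / (1 + t) * t := this
      _ = δ := by field_simp
  have hnorm : ‖(v t)⁻‖ = 0 := by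
    have h0 : (0:ℝ) ≤ φ t := sq_nonneg _
    have : φ t = 0 := le_antisymm hφt0 h0
    have := pow_eq_zero_iff (n := 2) (by norm_num) |>.mp this
    exact this
  exact norm_eq_zero.mp hnorm
end

section
/- Let s, q, f : ℝ → ℝ satisfy: s is continuous on [0,∞) and continuously differentiable on (0,∞) with s(r) > 0 for all r > 0; q is continuous on [0,∞) with q ≥ 0; f is continuous on [0,∞), twice continuously differentiable on (0,∞), and f ≥ 0; f''(r) + (s'(r)/s(r))·f'(r) = q(r)·f(r) for all r > 0; and s(r)·f'(r) → 0 as r → 0⁺. Then for all 0 < r' ≤ r, f(r) = f(r') + ∫_{r'}^{r} (1/s(η)) · ( ∫₀^{η} s(ξ)·q(ξ)·f(ξ) dξ ) dη. In particular, f'(r) ≥ 0 for all r > 0, so f is monotone increasing on [0,∞). -/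
open MeasureTheory Filter Topology intervalIntegral

/-- For the radial ODE `f'' + (s'/s) f' = q f` on `(0,∞)` with the same
hypotheses as in Statement 2, one has the integral representation
`f(r) = f(r') + ∫_{r'}^r s(η)⁻¹ (∫₀^η s(ξ) q(ξ) f(ξ) dξ) dη` for all `0 < r' ≤ r`;
in particular `f' ≥ 0` on `(0,∞)`, so `f` is monotone increasing on `[0,∞)`. -/
theorem stmt3 (s s' q f f' f'' : ℝ → ℝ)
    (hs_cont : ContinuousOn s (Set.Ici 0))
    (hs_pos : ∀ r > (0:ℝ), 0 < s r)
    (hs_deriv : ∀ r > (0:ℝ), HasDerivAt s (s' r) r)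
    (hs'_cont : ContinuousOn s' (Set.Ioi 0))
    (hq_cont : ContinuousOn q (Set.Ici 0))
    (hq_nonneg : ∀ r ≥ (0:ℝ), 0 ≤ q r)
    (hf_cont : ContinuousOn f (Set.Ici 0))
    (hf_deriv : ∀ r > (0:ℝ), HasDerivAt f (f' r) r)
    (hf'_deriv : ∀ r > (0:ℝ), HasDerivAt f' (f'' r) r)
    (hf''_cont : ContinuousOn f'' (Set.Ioi 0))
    (hf_nonneg : ∀ r ≥ (0:ℝ), 0 ≤ f r)
    (hode : ∀ r > (0:ℝ), f'' r + (s' r / s r) * f' r = q r * f r)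
    (hlim : Tendsto (fun r => s r * f' r) (𝓝[>] (0:ℝ)) (𝓝 0)) :
    (∀ r' r : ℝ, 0 < r' → r' ≤ r →
      f r = f r' + ∫ η in r'..r, (s η)⁻¹ * ∫ ξ in (0:ℝ)..η, s ξ * q ξ * f ξ) ∧
    (∀ r > (0:ℝ), 0 ≤ f' r) ∧ MonotoneOn f (Set.Ici 0) := by
  set g : ℝ → ℝ := fun η => ∫ ξ in (0:ℝ)..η, s ξ * q ξ * f ξ with hg_def
  have hsqf_cont : ContinuousOn (fun ξ => s ξ * q ξ * f ξ) (Set.Ici 0) :=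
    (hs_cont.mul hq_cont).mul hf_cont
  -- integrability of the inner integrand on [a, b] ⊆ [0, ∞)
  have hint_sqf : ∀ a b : ℝ, 0 ≤ a → 0 ≤ b →
      IntervalIntegrable (fun ξ => s ξ * q ξ * f ξ) volume a b := by
    intro a b ha hb
    apply (hsqf_cont.mono ?_).intervalIntegrable
    intro x hx
    rcases le_total a b with h | h
    · rw [Set.uIcc_of_le h] at hx; exact le_trans ha hx.1
    · rw [Set.uIcc_of_ge h] at hx; exact le_trans hb hx.1
  -- key identity : s η * f' η = g η for η > 0
  have key : ∀ η > (0:ℝ), s η * f' η = g η := by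
    intro η hη
    have hconst : ∀ a ∈ Set.Ioc (0:ℝ) η, s η * f' η - g η = s a * f' a - g a := by
      intro a ha
      have hderiv : ∀ x ∈ Set.uIcc a η,
          HasDerivAt (fun y => s y * f' y) (s x * q x * f x) x := by
        intro x hx
        rw [Set.uIcc_of_le ha.2] at hx
        have hx0 : 0 < x := lt_of_lt_of_le ha.1 hx.1
        have h1 := (hs_deriv x hx0).mul (hf'_deriv x hx0)
        have hsx : s x ≠ 0 := (hs_pos x hx0).ne'
        have heq : s' x * f' x + s x * f'' x = s x * q x * f x := by
          have h2 := hode x hx0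
          field_simp at h2
          linarith [h2]
        rwa [heq] at h1
      have hint : IntervalIntegrable (fun x => s x * q x * f x) volume a η :=
        hint_sqf a η ha.1.le (ha.1.trans_le ha.2).le
      have hftc := intervalIntegral.integral_eq_sub_of_hasDerivAt hderiv hint
      have hadd : (∫ ξ in (0:ℝ)..a, s ξ * q ξ * f ξ) + ∫ ξ in a..η, s ξ * q ξ * f ξ
          = ∫ ξ in (0:ℝ)..η, s ξ * q ξ * f ξ :=
        intervalIntegral.integral_add_adjacent_intervals
          (hint_sqf 0 a le_rfl ha.1.le) hint
      have : g η = g a + ∫ ξ in a..η, s ξ * q ξ * f ξ := by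
        rw [hg_def]; simp only; linarith [hadd]
      rw [this, hftc]; ring
    -- g tends to 0 at 0⁺
    have hIoc_mem : Set.Ioc (0:ℝ) η ∈ 𝓝[>] (0:ℝ) :=
      Ioc_mem_nhdsGT_of_mem ⟨le_rfl, hη⟩
    have hg_cont : ContinuousOn g (Set.uIcc 0 η) := by
      apply intervalIntegral.continuousOn_primitive_interval
      apply ContinuousOn.integrableOn_compact isCompact_uIcc
      apply hsqf_cont.mono
      rw [Set.uIcc_of_le hη.le]
      exact fun x hx => hx.1
    have hg0 : Tendsto g (𝓝[>] (0:ℝ)) (𝓝 0) := by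
      have h0 : g 0 = 0 := by simp [hg_def]
      have := (hg_cont 0 (by rw [Set.uIcc_of_le hη.le]; exact ⟨le_rfl, hη.le⟩)).tendsto
      rw [h0] at this
      refine this.mono_left (nhdsWithin_le_of_mem ?_)
      exact mem_of_superset hIoc_mem (by
        rw [Set.uIcc_of_le hη.le]; exact Set.Ioc_subset_Icc_self)
    have htend0 : Tendsto (fun a => s a * f' a - g a) (𝓝[>] (0:ℝ)) (𝓝 0) := by
      simpa using hlim.sub hg0
    have htendc : Tendsto (fun a => s a * f' a - g a) (𝓝[>] (0:ℝ))
        (𝓝 (s η * f' η - g η)) := by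
      refine Tendsto.congr' ?_ tendsto_const_nhds
      filter_upwards [hIoc_mem] with a ha using hconst a ha
    have := tendsto_nhds_unique htendc htend0
    linarith
  -- g is nonnegative and f' has the integral form
  have hs_nonneg : ∀ u ≥ (0:ℝ), 0 ≤ s u := by
    intro u hu
    rcases eq_or_lt_of_le hu with rfl | h
    · have htends : Tendsto s (𝓝[>] (0:ℝ)) (𝓝 (s 0)) :=
        ((hs_cont 0 Set.self_mem_Ici).tendsto).mono_left (nhdsWithin_mono 0 Set.Ioi_subset_Ici_self)
      refine ge_of_tendsto htends ?_
      filter_upwards [self_mem_nhdsWithin] with x hx using (hs_pos x hx).le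
    · exact (hs_pos u h).le
  have hg_nonneg : ∀ η > (0:ℝ), 0 ≤ g η := by
    intro η hη
    apply intervalIntegral.integral_nonneg hη.le
    intro u hu
    exact mul_nonneg (mul_nonneg (hs_nonneg u hu.1) (hq_nonneg u hu.1)) (hf_nonneg u hu.1)
  have hf'_eq : ∀ η > (0:ℝ), f' η = (s η)⁻¹ * g η := by
    intro η hη
    have hsη : s η ≠ 0 := (hs_pos η hη).ne'
    rw [inv_mul_eq_div, eq_div_iff hsη, mul_comm]
    exact key η hη
  have hf'_nonneg : ∀ r > (0:ℝ), 0 ≤ f' r := by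
    intro r hr
    rw [hf'_eq r hr]
    exact mul_nonneg (inv_nonneg.2 (hs_pos r hr).le) (hg_nonneg r hr)
  -- integral representation
  have hrep : ∀ r' r : ℝ, 0 < r' → r' ≤ r →
      f r = f r' + ∫ η in r'..r, (s η)⁻¹ * g η := by
    intro a b ha hab
    have hsub : Set.uIcc a b ⊆ Set.Ioi 0 := by
      rw [Set.uIcc_of_le hab]
      exact fun x hx => lt_of_lt_of_le ha hx.1
    have hf'cont : ContinuousOn f' (Set.Ioi 0) := fun x hx =>
      (hf'_deriv x hx).continuousAt.continuousWithinAt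
    have hint : IntervalIntegrable f' volume a b :=
      (hf'cont.mono hsub).intervalIntegrable
    have hftc : ∫ x in a..b, f' x = f b - f a :=
      intervalIntegral.integral_eq_sub_of_hasDerivAt
        (fun x hx => hf_deriv x (hsub hx)) hint
    have hcongr : (∫ x in a..b, (s x)⁻¹ * g x) = ∫ x in a..b, f' x :=
      intervalIntegral.integral_congr fun x hx => (hf'_eq x (hsub hx)).symm
    rw [hcongr, hftc]; ring
  refine ⟨hrep, hf'_nonneg, ?_⟩
  -- monotone
  have hmono_pos : ∀ a b : ℝ, 0 < a → a ≤ b → f a ≤ f b := by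
    intro a b ha hab
    have h := hrep a b ha hab
    have hnn : 0 ≤ ∫ η in a..b, (s η)⁻¹ * g η := by
      apply intervalIntegral.integral_nonneg hab
      intro u hu
      have hu0 : 0 < u := lt_of_lt_of_le ha hu.1
      exact mul_nonneg (inv_nonneg.2 (hs_pos u hu0).le) (hg_nonneg u hu0)
    linarith
  intro a ha b hb hab
  rcases eq_or_lt_of_le (Set.mem_Ici.mp ha : (0:ℝ) ≤ a) with h0 | h0
  · subst h0
    rcases eq_or_lt_of_le hab with rfl | hb'
    · exact le_refl _
    · have hlim2 : Tendsto f (𝓝[>] (0:ℝ)) (𝓝 (f 0)) :=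
        ((hf_cont 0 Set.self_mem_Ici).tendsto).mono_left (nhdsWithin_mono 0 Set.Ioi_subset_Ici_self)
      refine le_of_tendsto hlim2 ?_
      filter_upwards [Ioc_mem_nhdsGT_of_mem (⟨le_rfl, hb'⟩ : (0:ℝ) ∈ Set.Ico 0 b)] with x hx
      exact hmono_pos x b hx.1 hx.2
  · exact hmono_pos a b h0 hab
end

section
/- Let s, q, f : ℝ → ℝ satisfy: s is continuous on [0,∞) and continuously differentiable on (0,∞) with s(r) > 0 for all r > 0; q is continuous on [0,∞) with q ≥ 0; f is continuous on [0,∞), twice continuously differentiable on (0,∞), and f ≥ 0; f''(r) + (s'(r)/s(r))·f'(r) = q(r)·f(r) for all r > 0; and s(r)·f'(r) → 0 as r → 0⁺. Then for all 0 < r' < r, f(r) ≥ f(0)·( 1 + ∫_{r'}^{r} ( ∫₀^{η} s(ξ)·q(ξ) dξ ) / s(η) dη ). Consequently, if f is bounded on [0,∞) and for some r' > 0 the improper integral ∫_{r'}^{∞} ( ∫₀^{η} s(ξ)·q(ξ) dξ ) / s(η) dη diverges to ∞, then f(0) = 0. -/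
open MeasureTheory Filter Topology intervalIntegral

/-- For the radial ODE `f'' + (s'/s) f' = q f` on `(0,∞)` with the same
hypotheses as in Statement 2, one has
`f(r) ≥ f(0) (1 + ∫_{r'}^r (∫₀^η s(ξ) q(ξ) dξ) / s(η) dη)` for all `0 < r' < r`.
Consequently, if `f` is bounded on `[0,∞)` and for some `r' > 0` the improper integral
`∫_{r'}^∞ (∫₀^η s q) / s(η) dη` diverges to `∞`, then `f(0) = 0`. -/
theorem stmt4 (s s' q f f' f'' : ℝ → ℝ)
    (hs_cont : ContinuousOn s (Set.Ici 0))
    (hs_pos : ∀ r > (0:ℝ), 0 < s r)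
    (hs_deriv : ∀ r > (0:ℝ), HasDerivAt s (s' r) r)
    (hs'_cont : ContinuousOn s' (Set.Ioi 0))
    (hq_cont : ContinuousOn q (Set.Ici 0))
    (hq_nonneg : ∀ r ≥ (0:ℝ), 0 ≤ q r)
    (hf_cont : ContinuousOn f (Set.Ici 0))
    (hf_deriv : ∀ r > (0:ℝ), HasDerivAt f (f' r) r)
    (hf'_deriv : ∀ r > (0:ℝ), HasDerivAt f' (f'' r) r)
    (hf''_cont : ContinuousOn f'' (Set.Ioi 0))
    (hf_nonneg : ∀ r ≥ (0:ℝ), 0 ≤ f r)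
    (hode : ∀ r > (0:ℝ), f'' r + (s' r / s r) * f' r = q r * f r)
    (hlim : Tendsto (fun r => s r * f' r) (𝓝[>] (0:ℝ)) (𝓝 0)) :
    (∀ r' r : ℝ, 0 < r' → r' < r →
      f 0 * (1 + ∫ η in r'..r, (∫ ξ in (0:ℝ)..η, s ξ * q ξ) / s η) ≤ f r) ∧
    ((∃ C : ℝ, ∀ r ≥ (0:ℝ), f r ≤ C) →
      (∃ r' > (0:ℝ), Tendsto
        (fun R => ∫ η in r'..R, (∫ ξ in (0:ℝ)..η, s ξ * q ξ) / s η) atTop atTop) →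
      f 0 = 0) := by
  set g : ℝ → ℝ := fun r => s r * f' r with hgdef
  set V : ℝ → ℝ := fun η => ∫ ξ in (0:ℝ)..η, s ξ * q ξ with hVdef
  have hsq_cont : ContinuousOn (fun ξ => s ξ * q ξ) (Set.Ici 0) := hs_cont.mul hq_cont
  have hsq_int : ∀ a b : ℝ, 0 ≤ a → 0 ≤ b →
      IntervalIntegrable (fun ξ => s ξ * q ξ) volume a b := by
    intro a b ha hb
    refine (hsq_cont.mono ?_).intervalIntegrable
    intro x hx
    rcases le_total a b with h | h
    · rw [Set.uIcc_of_le h] at hx; exact le_trans ha hx.1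
    · rw [Set.uIcc_of_ge h] at hx; exact le_trans hb hx.1
  -- derivative of g = s·f'
  have hg_deriv : ∀ r > (0:ℝ), HasDerivAt g (s r * q r * f r) r := by
    intro r hr
    have h1 := (hs_deriv r hr).mul (hf'_deriv r hr)
    have hsne : s r ≠ 0 := (hs_pos r hr).ne'
    have key : s' r * f' r + s r * f'' r = s r * q r * f r := by
      have h := hode r hr
      field_simp at h
      linear_combination h
    rw [key] at h1
    exact h1
  -- g is monotone on (0,∞)
  have hg_mono : MonotoneOn g (Set.Ioi 0) := by
    apply monotoneOn_of_deriv_nonneg (convex_Ioi 0)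
    · exact fun x hx => (hg_deriv x (Set.mem_Ioi.mp hx)).continuousAt.continuousWithinAt
    · rw [interior_Ioi]
      exact fun x hx =>
        (hg_deriv x (Set.mem_Ioi.mp hx)).differentiableAt.differentiableWithinAt
    · rw [interior_Ioi]
      intro x hx
      have hx0 : (0:ℝ) < x := Set.mem_Ioi.mp hx
      rw [(hg_deriv x hx0).deriv]
      exact mul_nonneg (mul_nonneg (hs_pos x hx0).le (hq_nonneg x hx0.le))
        (hf_nonneg x hx0.le)
  -- g ≥ 0 on (0,∞)
  have hg_nonneg : ∀ x > (0:ℝ), 0 ≤ g x := by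
    intro x hx
    refine le_of_tendsto hlim ?_
    filter_upwards [Ioo_mem_nhdsGT_of_mem (Set.mem_Ico.mpr ⟨le_refl 0, hx⟩)] with ε hε
    exact hg_mono hε.1 hx hε.2.le
  -- f' ≥ 0 on (0,∞)
  have hf'_nonneg : ∀ x > (0:ℝ), 0 ≤ f' x := by
    intro x hx
    have h := div_nonneg (hg_nonneg x hx) (hs_pos x hx).le
    rw [hgdef] at h
    simp only at h
    rwa [mul_div_cancel_left₀ _ (hs_pos x hx).ne'] at h
  -- f is monotone on [0,∞)
  have hf_mono : MonotoneOn f (Set.Ici 0) := by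
    apply monotoneOn_of_deriv_nonneg (convex_Ici 0) hf_cont
    · rw [interior_Ici]
      exact fun x hx =>
        (hf_deriv x (Set.mem_Ioi.mp hx)).differentiableAt.differentiableWithinAt
    · rw [interior_Ici]
      intro x hx
      have hx0 : (0:ℝ) < x := Set.mem_Ioi.mp hx
      rw [(hf_deriv x hx0).deriv]
      exact hf'_nonneg x hx0
  have hf_ge : ∀ x ≥ (0:ℝ), f 0 ≤ f x := fun x hx =>
    hf_mono Set.self_mem_Ici hx hx
  -- continuity of the primitive V
  have hV_cont : ∀ b > (0:ℝ), ContinuousOn V (Set.Icc 0 b) := by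
    intro b hb
    have huIcc : Set.uIcc (0:ℝ) b = Set.Icc 0 b := Set.uIcc_of_le hb.le
    rw [← huIcc]
    exact intervalIntegral.continuousOn_primitive_interval
      ((hsq_cont.mono (by rw [huIcc]; exact Set.Icc_subset_Ici_self)).integrableOn_compact
        (by rw [huIcc]; exact isCompact_Icc))
  -- key estimate : f 0 * V η ≤ g η for η > 0
  have hgV : ∀ η > (0:ℝ), f 0 * V η ≤ g η := by
    intro η hη
    have hVlim : Tendsto V (𝓝[>] (0:ℝ)) (𝓝 0) := by
      have hc := (hV_cont η hη) 0 ⟨le_refl 0, hη.le⟩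
      have hV0 : V 0 = 0 := intervalIntegral.integral_same
      rw [ContinuousWithinAt, hV0] at hc
      rw [← nhdsWithin_Ioo_eq_nhdsGT hη]
      exact hc.mono_left (nhdsWithin_mono _ Set.Ioo_subset_Icc_self)
    have htend : Tendsto (fun ε => f 0 * (V η - V ε) + g ε) (𝓝[>] (0:ℝ))
        (𝓝 (f 0 * (V η - 0) + 0)) :=
      ((tendsto_const_nhds.sub hVlim).const_mul _).add hlim
    rw [sub_zero, add_zero] at htend
    refine le_of_tendsto htend ?_
    filter_upwards [Ioo_mem_nhdsGT_of_mem (Set.mem_Ico.mpr ⟨le_refl 0, hη⟩)] with ε hε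
    have hsub : Set.uIcc ε η ⊆ Set.Ioi 0 := by
      rw [Set.uIcc_of_le hε.2.le]
      exact fun x hx => lt_of_lt_of_le hε.1 hx.1
    have hint : IntervalIntegrable (fun x => s x * q x * f x) volume ε η :=
      (((hsq_cont.mul hf_cont).mono (fun x hx => Set.mem_Ici.mpr (le_of_lt (hsub hx))))).intervalIntegrable
    have hftc : ∫ x in ε..η, s x * q x * f x = g η - g ε :=
      intervalIntegral.integral_eq_sub_of_hasDerivAt
        (fun x hx => hg_deriv x (hsub hx)) hint
    have hmono : ∫ x in ε..η, f 0 * (s x * q x) ≤ ∫ x in ε..η, s x * q x * f x := by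
      refine intervalIntegral.integral_mono_on hε.2.le
        ((hsq_int ε η hε.1.le (hε.1.trans hε.2).le).const_mul _) hint ?_
      intro x hx
      have hx0 : (0:ℝ) < x := lt_of_lt_of_le hε.1 hx.1
      have hsq0 : 0 ≤ s x * q x := mul_nonneg (hs_pos x hx0).le (hq_nonneg x hx0.le)
      calc f 0 * (s x * q x) ≤ f x * (s x * q x) :=
            mul_le_mul_of_nonneg_right (hf_ge x hx0.le) hsq0
        _ = s x * q x * f x := by ring
    have hVdiff : V η - V ε = ∫ x in ε..η, s x * q x :=
      intervalIntegral.integral_interval_sub_left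
        (hsq_int 0 η (le_refl 0) (hε.1.trans hε.2).le)
        (hsq_int 0 ε (le_refl 0) hε.1.le)
    have hfin : f 0 * (V η - V ε) ≤ g η - g ε := by
      rw [hVdiff, ← intervalIntegral.integral_const_mul, ← hftc]
      exact hmono
    linarith
  -- pointwise lower bound for f'
  have hf'_lb : ∀ η > (0:ℝ), f 0 * (V η / s η) ≤ f' η := by
    intro η hη
    have hs := hs_pos η hη
    have h2 : f' η = g η / s η := by
      rw [hgdef]
      simp only
      rw [mul_div_cancel_left₀ _ hs.ne']
    rw [h2, ← mul_div_assoc]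
    exact div_le_div_of_nonneg_right (hgV η hη) hs.le
  -- main inequality
  have main : ∀ r' r : ℝ, 0 < r' → r' < r →
      f 0 * (1 + ∫ η in r'..r, V η / s η) ≤ f r := by
    intro r' r hr' hlt
    have hsub : Set.uIcc r' r ⊆ Set.Ioi 0 := by
      rw [Set.uIcc_of_le hlt.le]
      exact fun x hx => lt_of_lt_of_le hr' hx.1
    have hf'_cont : ContinuousOn f' (Set.Ioi 0) :=
      fun x hx => (hf'_deriv x (Set.mem_Ioi.mp hx)).continuousAt.continuousWithinAt
    have hint_f' : IntervalIntegrable f' volume r' r :=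
      (hf'_cont.mono hsub).intervalIntegrable
    have hftc : ∫ x in r'..r, f' x = f r - f r' :=
      intervalIntegral.integral_eq_sub_of_hasDerivAt
        (fun x hx => hf_deriv x (hsub hx)) hint_f'
    have hVs_cont : ContinuousOn (fun η => V η / s η) (Set.uIcc r' r) := by
      refine ContinuousOn.div ?_
        (hs_cont.mono (fun x hx => Set.mem_Ici.mpr (le_of_lt (hsub hx))))
        (fun x hx => (hs_pos x (hsub hx)).ne')
      refine (hV_cont r (hr'.trans hlt)).mono ?_
      rw [Set.uIcc_of_le hlt.le]
      exact Set.Icc_subset_Icc hr'.le le_rfl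
    have hint_Vs : IntervalIntegrable (fun η => V η / s η) volume r' r :=
      hVs_cont.intervalIntegrable
    have hmono : ∫ η in r'..r, f 0 * (V η / s η) ≤ ∫ η in r'..r, f' η := by
      refine intervalIntegral.integral_mono_on hlt.le (hint_Vs.const_mul _) hint_f' ?_
      intro x hx
      exact hf'_lb x (lt_of_lt_of_le hr' hx.1)
    rw [intervalIntegral.integral_const_mul, hftc] at hmono
    have hge := hf_ge r' hr'.le
    have : f 0 * (1 + ∫ η in r'..r, V η / s η)
        = f 0 + f 0 * ∫ η in r'..r, V η / s η := by ring
    linarith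
  refine ⟨main, ?_⟩
  rintro ⟨C, hC⟩ ⟨r', hr', htend⟩
  by_contra h0
  have hf0 : 0 < f 0 := lt_of_le_of_ne (hf_nonneg 0 le_rfl) (Ne.symm h0)
  have h1 : Tendsto (fun R => f 0 * (1 + ∫ η in r'..R, V η / s η)) atTop atTop :=
    (tendsto_atTop_add_const_left atTop 1 htend).const_mul_atTop hf0
  have h2 : ∀ᶠ R in atTop, C < f 0 * (1 + ∫ η in r'..R, V η / s η) :=
    h1.eventually_gt_atTop C
  rcases (h2.and (eventually_gt_atTop r')).exists with ⟨R, hR1, hR2⟩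
  have hm := main r' R hr' hR2
  have hCR := hC R (hr'.trans hR2).le
  linarith
end

section
/- For every continuous function s : (0,∞) → (0,∞) there exists an infinitely differentiable function f : ℝ → ℝ with f ≥ 0 and f = 0 on (−∞, 1] such that ∫_{1}^{∞} ( ∫₀^{r} s(ξ)·f(ξ) dξ ) / s(r) dr = ∞. -/
open MeasureTheory Filter Topology
open scoped ENNReal Manifold

/-- For every continuous `s : (0,∞) → (0,∞)` there is a smooth
nonnegative `f : ℝ → ℝ` vanishing on `(-∞,1]` such that
`∫_1^∞ (∫₀^r s(ξ) f(ξ) dξ) / s(r) dr = ∞`. -/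
theorem stmt6 (s : ℝ → ℝ)
    (hs_cont : ContinuousOn s (Set.Ioi 0))
    (hs_pos : ∀ r > (0:ℝ), 0 < s r) :
    ∃ f : ℝ → ℝ, ContDiff ℝ (⊤ : ℕ∞) f ∧ (∀ x, 0 ≤ f x) ∧ (∀ x ≤ (1:ℝ), f x = 0) ∧
      (∫⁻ r in Set.Ioi (1:ℝ),
        (∫⁻ ξ in Set.Ioc (0:ℝ) r, ENNReal.ofReal (s ξ * f ξ)) / ENNReal.ofReal (s r)) = ⊤ := by
  classical
  -- sup of s on [n+1, n+2]
  set S : ℤ → ℝ := fun n => sSup (s '' Set.Icc ((n:ℝ)+1) ((n:ℝ)+2)) with hSdef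
  -- "mass" of s on (n, n+1)
  set m : ℤ → ℝ≥0∞ := fun n => ∫⁻ ξ in Set.Ioo (n:ℝ) ((n:ℝ)+1), ENNReal.ofReal (s ξ) with hmdef
  have hsub : ∀ n : ℤ, 2 ≤ n → Set.Icc (n:ℝ) ((n:ℝ)+2) ⊆ Set.Ioi 0 := by
    intro n hn ξ hξ
    have : (2:ℝ) ≤ (n:ℝ) := by exact_mod_cast hn
    exact lt_of_lt_of_le (by linarith) hξ.1
  -- m n is positive
  have hm_ne0 : ∀ n : ℤ, 2 ≤ n → m n ≠ 0 := by
    intro n hn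
    have hsub1 : Set.Icc (n:ℝ) ((n:ℝ)+1) ⊆ Set.Ioi 0 := fun ξ hξ =>
      hsub n hn ⟨hξ.1, by linarith [hξ.2]⟩
    obtain ⟨ξ0, hξ0, hmin⟩ := isCompact_Icc.exists_isMinOn
      ⟨(n:ℝ), Set.left_mem_Icc.2 (by linarith)⟩ (hs_cont.mono hsub1)
    have hε : 0 < s ξ0 := hs_pos _ (hsub1 hξ0)
    have hlow : ENNReal.ofReal (s ξ0) * volume (Set.Ioo (n:ℝ) ((n:ℝ)+1)) ≤ m n := by
      rw [← setLIntegral_const]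
      refine lintegral_mono_ae ((ae_restrict_iff' measurableSet_Ioo).2 (ae_of_all _ ?_))
      intro ξ hξ
      exact ENNReal.ofReal_le_ofReal (hmin ⟨hξ.1.le, hξ.2.le⟩)
    have hvol : volume (Set.Ioo (n:ℝ) ((n:ℝ)+1)) = 1 := by
      rw [Real.volume_Ioo]; norm_num
    rw [hvol, mul_one] at hlow
    exact fun h => (ENNReal.ofReal_pos.2 hε).ne' (le_antisymm (h ▸ hlow) bot_le)
  -- m n is finite
  have hm_netop : ∀ n : ℤ, 2 ≤ n → m n ≠ ⊤ := by
    intro n hn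
    have hsub1 : Set.Icc (n:ℝ) ((n:ℝ)+1) ⊆ Set.Ioi 0 := fun ξ hξ =>
      hsub n hn ⟨hξ.1, by linarith [hξ.2]⟩
    have hbdd : BddAbove (s '' Set.Icc (n:ℝ) ((n:ℝ)+1)) :=
      (isCompact_Icc.image_of_continuousOn (hs_cont.mono hsub1)).bddAbove
    set M := sSup (s '' Set.Icc (n:ℝ) ((n:ℝ)+1))
    have hup : m n ≤ ENNReal.ofReal M * volume (Set.Ioo (n:ℝ) ((n:ℝ)+1)) := by
      rw [← setLIntegral_const]
      refine lintegral_mono_ae ((ae_restrict_iff' measurableSet_Ioo).2 (ae_of_all _ ?_))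
      intro ξ hξ
      exact ENNReal.ofReal_le_ofReal (le_csSup hbdd ⟨ξ, ⟨hξ.1.le, hξ.2.le⟩, rfl⟩)
    have hvol : volume (Set.Ioo (n:ℝ) ((n:ℝ)+1)) = 1 := by
      rw [Real.volume_Ioo]; norm_num
    rw [hvol, mul_one] at hup
    exact fun h => ENNReal.ofReal_ne_top (top_le_iff.1 (h ▸ hup))
  -- s r ≤ S n on [n+1, n+2]
  have hS_ge : ∀ n : ℤ, 2 ≤ n → ∀ r ∈ Set.Icc ((n:ℝ)+1) ((n:ℝ)+2), s r ≤ S n := by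
    intro n hn r hr
    have hsub2 : Set.Icc ((n:ℝ)+1) ((n:ℝ)+2) ⊆ Set.Ioi 0 := fun ξ hξ =>
      hsub n hn ⟨by linarith [hξ.1], hξ.2⟩
    have hbdd : BddAbove (s '' Set.Icc ((n:ℝ)+1) ((n:ℝ)+2)) :=
      (isCompact_Icc.image_of_continuousOn (hs_cont.mono hsub2)).bddAbove
    exact le_csSup hbdd ⟨r, hr, rfl⟩
  have hS_pos : ∀ n : ℤ, 2 ≤ n → 0 < S n := by
    intro n hn
    have hmem : ((n:ℝ)+1) ∈ Set.Icc ((n:ℝ)+1) ((n:ℝ)+2) := Set.left_mem_Icc.2 (by linarith)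
    have : (2:ℝ) ≤ (n:ℝ) := by exact_mod_cast hn
    exact lt_of_lt_of_le (hs_pos _ (by linarith)) (hS_ge n hn _ hmem)
  -- the target lower bound
  set a : ℤ → ℝ := fun n => if 2 ≤ n then S n / (m n).toReal else 0 with hadef
  have ha_nonneg : ∀ n, 0 ≤ a n := by
    intro n
    simp only [hadef]
    split
    · exact div_nonneg (hS_pos n ‹_›).le ENNReal.toReal_nonneg
    · exact le_rfl
  -- a smooth function dominating a ∘ ⌊·⌋
  have hloc : ∀ x : ℝ, ∃ c : ℝ, ∀ᶠ y in 𝓝 x, c ∈ Set.Ioi (a ⌊y⌋) := by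
    intro x
    refine ⟨max (max (a (⌊x⌋ - 1)) (a ⌊x⌋)) (a (⌊x⌋ + 1)) + 1,
      Filter.eventually_of_mem (Ioo_mem_nhds (by linarith) (by linarith) :
        Set.Ioo (x-1) (x+1) ∈ 𝓝 x) ?_⟩
    intro y hy
    have h1 : ⌊x⌋ - 1 ≤ ⌊y⌋ := by
      have := Int.floor_le_floor (R := ℝ) hy.1.le
      rwa [show x - 1 = x - (1:ℤ) by norm_num, Int.floor_sub_intCast] at this
    have h2 : ⌊y⌋ ≤ ⌊x⌋ + 1 := by
      have := Int.floor_le_floor (R := ℝ) hy.2.le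
      rwa [show x + 1 = x + (1:ℤ) by norm_num, Int.floor_add_intCast] at this
    have hcase : ⌊y⌋ = ⌊x⌋ - 1 ∨ ⌊y⌋ = ⌊x⌋ ∨ ⌊y⌋ = ⌊x⌋ + 1 := by omega
    have hle : a ⌊y⌋ ≤ max (max (a (⌊x⌋ - 1)) (a ⌊x⌋)) (a (⌊x⌋ + 1)) := by
      rcases hcase with h | h | h <;> rw [h]
      · exact le_max_of_le_left (le_max_left _ _)
      · exact le_max_of_le_left (le_max_right _ _)
      · exact le_max_right _ _
    exact Set.mem_Ioi.2 (by linarith)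
  obtain ⟨g, hg⟩ := exists_contMDiffMap_forall_mem_convex_of_local_const (𝓘(ℝ, ℝ)) (n := (⊤ : ℕ∞))
    (t := fun x : ℝ => Set.Ioi (a ⌊x⌋)) (fun x => convex_Ioi _) hloc
  have hg_smooth : ContDiff ℝ (⊤ : ℕ∞) g := contMDiff_iff_contDiff.1 g.contMDiff
  -- the function f
  refine ⟨fun x => Real.smoothTransition (x - 1) * g x, ?_, ?_, ?_, ?_⟩
  · exact (Real.smoothTransition.contDiff.comp (contDiff_id.sub contDiff_const)).mul hg_smooth
  · intro x
    exact mul_nonneg (Real.smoothTransition.nonneg _)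
      (le_trans (ha_nonneg _) (Set.mem_Ioi.1 (hg x)).le)
  · intro x hx
    show Real.smoothTransition (x - 1) * g x = 0
    rw [Real.smoothTransition.zero_of_nonpos (by linarith : x - 1 ≤ 0), zero_mul]
  -- divergence
  · rw [eq_top_iff]
    have key : ∀ r ∈ Set.Ioi (3:ℝ), (1:ℝ≥0∞) ≤
        (∫⁻ ξ in Set.Ioc (0:ℝ) r,
          ENNReal.ofReal (s ξ * (Real.smoothTransition (ξ - 1) * g ξ))) /
          ENNReal.ofReal (s r) := by
      intro r hr
      rw [Set.mem_Ioi] at hr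
      set n : ℤ := ⌈r⌉ - 2 with hndef
      have hn2 : 2 ≤ n := by
        have : (3:ℤ) < ⌈r⌉ := Int.lt_ceil.2 (by exact_mod_cast hr)
        omega
      have hnr : (2:ℝ) ≤ (n:ℝ) := by exact_mod_cast hn2
      have hr1 : (n:ℝ) + 1 < r := by
        have := Int.ceil_lt_add_one r
        have hcast : ((⌈r⌉:ℤ):ℝ) < r + 1 := by exact_mod_cast this
        have : ((n:ℤ):ℝ) = ((⌈r⌉:ℤ):ℝ) - 2 := by push_cast [hndef]; ring
        linarith
      have hr2 : r ≤ (n:ℝ) + 2 := by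
        have := Int.le_ceil r
        have : r ≤ ((⌈r⌉:ℤ):ℝ) := by exact_mod_cast this
        have hc : ((n:ℤ):ℝ) = ((⌈r⌉:ℤ):ℝ) - 2 := by push_cast [hndef]; ring
        linarith
      have hsr_pos : 0 < s r := hs_pos r (by linarith)
      rw [ENNReal.le_div_iff_mul_le
        (Or.inl ((ENNReal.ofReal_pos.2 hsr_pos).ne')) (Or.inl ENNReal.ofReal_ne_top), one_mul]
      -- main chain
      have step1 : (∫⁻ ξ in Set.Ioo (n:ℝ) ((n:ℝ)+1), ENNReal.ofReal (s ξ * a n)) ≤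
          ∫⁻ ξ in Set.Ioc (0:ℝ) r,
            ENNReal.ofReal (s ξ * (Real.smoothTransition (ξ - 1) * g ξ)) := by
        have hsubset : Set.Ioo (n:ℝ) ((n:ℝ)+1) ⊆ Set.Ioc (0:ℝ) r := fun ξ hξ =>
          ⟨by linarith [hξ.1], by linarith [hξ.2]⟩
        refine le_trans ?_
          (lintegral_mono_set (f := fun ξ =>
            ENNReal.ofReal (s ξ * (Real.smoothTransition (ξ - 1) * g ξ))) hsubset)
        refine lintegral_mono_ae ((ae_restrict_iff' measurableSet_Ioo).2 (ae_of_all _ ?_))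
        intro ξ hξ
        have hξpos : 0 < ξ := by have := hξ.1; linarith
        have hfloor : ⌊ξ⌋ = n := Int.floor_eq_iff.2 ⟨hξ.1.le, hξ.2⟩
        have htr : Real.smoothTransition (ξ - 1) = 1 :=
          Real.smoothTransition.one_of_one_le (by linarith [hξ.1])
        have hgx : a n ≤ Real.smoothTransition (ξ - 1) * g ξ := by
          rw [htr, one_mul]
          have := Set.mem_Ioi.1 (hg ξ)
          rw [hfloor] at this
          exact this.le
        exact ENNReal.ofReal_le_ofReal
          (mul_le_mul_of_nonneg_left hgx (hs_pos ξ hξpos).le)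
      have step2 : ENNReal.ofReal (s r) ≤
          ∫⁻ ξ in Set.Ioo (n:ℝ) ((n:ℝ)+1), ENNReal.ofReal (s ξ * a n) := by
        have heq : (∫⁻ ξ in Set.Ioo (n:ℝ) ((n:ℝ)+1), ENNReal.ofReal (s ξ * a n)) =
            ENNReal.ofReal (a n) * m n := by
          rw [hmdef]
          rw [← lintegral_const_mul' _ _ ENNReal.ofReal_ne_top]
          congr 1
          funext ξ
          rw [← ENNReal.ofReal_mul (ha_nonneg n), mul_comm]
        rw [heq]
        have hm0 := hm_ne0 n hn2
        have hmtop := hm_netop n hn2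
        have hmt_pos : 0 < (m n).toReal := ENNReal.toReal_pos hm0 hmtop
        have han : a n = S n / (m n).toReal := by simp [hadef, hn2]
        rw [← ENNReal.ofReal_toReal hmtop, ← ENNReal.ofReal_mul (ha_nonneg n)]
        refine ENNReal.ofReal_le_ofReal ?_
        rw [han, div_mul_cancel₀ _ hmt_pos.ne']
        exact hS_ge n hn2 r ⟨hr1.le, hr2⟩
      exact le_trans step2 step1
    calc (⊤:ℝ≥0∞) = volume (Set.Ioi (3:ℝ)) := Real.volume_Ioi.symm
      _ = ∫⁻ _ in Set.Ioi (3:ℝ), 1 := (setLIntegral_one _).symm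
      _ ≤ ∫⁻ r in Set.Ioi (3:ℝ),
          (∫⁻ ξ in Set.Ioc (0:ℝ) r,
            ENNReal.ofReal (s ξ * (Real.smoothTransition (ξ - 1) * g ξ))) /
            ENNReal.ofReal (s r) :=
        lintegral_mono_ae ((ae_restrict_iff' measurableSet_Ioi).2 (ae_of_all _ key))
      _ ≤ ∫⁻ r in Set.Ioi (1:ℝ),
          (∫⁻ ξ in Set.Ioc (0:ℝ) r,
            ENNReal.ofReal (s ξ * (Real.smoothTransition (ξ - 1) * g ξ))) /
            ENNReal.ofReal (s r) :=
        lintegral_mono_set (fun r hr => Set.mem_Ioi.2 (by linarith [Set.mem_Ioi.1 hr]))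
end

section
/- Let r₀ > 0 and let A, B : [0,∞) → (0,∞) be continuous functions. Then there exists an infinitely differentiable convex function f : ℝ → [0,∞) such that f = 0 on (−∞, r₀], f is strictly increasing on [r₀,∞), and ∫_{r₀}^{∞} f(t)·f'(t) / max( log( A(t) + f'(t)²·B(t) ), 1 ) dt = ∞. -/
open MeasureTheory Filter Topology
open scoped ENNReal

/-- Given `r₀ > 0` and continuous `A, B : [0,∞) → (0,∞)`, there is a
smooth convex `f : ℝ → [0,∞)` vanishing on `(-∞,r₀]`, strictly increasing on `[r₀,∞)`,
with `∫_{r₀}^∞ f(t) f'(t) / max(log(A(t) + f'(t)² B(t)), 1) dt = ∞`. -/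
theorem stmt7 (r₀ : ℝ) (hr₀ : 0 < r₀) (A B : ℝ → ℝ)
    (hA_cont : ContinuousOn A (Set.Ici 0)) (hA_pos : ∀ t ≥ (0:ℝ), 0 < A t)
    (hB_cont : ContinuousOn B (Set.Ici 0)) (hB_pos : ∀ t ≥ (0:ℝ), 0 < B t) :
    ∃ f : ℝ → ℝ, ContDiff ℝ (⊤ : ℕ∞) f ∧ ConvexOn ℝ Set.univ f ∧ (∀ x, 0 ≤ f x) ∧
      (∀ x ≤ r₀, f x = 0) ∧ StrictMonoOn f (Set.Ici r₀) ∧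
      (∫⁻ t in Set.Ioi r₀, ENNReal.ofReal
        (f t * deriv f t / max (Real.log (A t + (deriv f t) ^ 2 * B t)) 1)) = ⊤ := by
  classical
  -- the continuous "profile" function we must eventually dominate
  set L : ℝ → ℝ := fun x => max (Real.log (A (max x 0) + B (max x 0))) 0 + 2 with hLdef
  have hmxm : ∀ x : ℝ, max x 0 ∈ Set.Ici (0:ℝ) := fun x => le_max_right x 0
  have hA' : Continuous fun x : ℝ => A (max x 0) :=
    hA_cont.comp_continuous (continuous_id.max continuous_const) hmxm
  have hB' : Continuous fun x : ℝ => B (max x 0) :=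
    hB_cont.comp_continuous (continuous_id.max continuous_const) hmxm
  have hABpos : ∀ x : ℝ, 0 < A (max x 0) + B (max x 0) := fun x =>
    add_pos (hA_pos _ (hmxm x)) (hB_pos _ (hmxm x))
  have hLcont : Continuous L :=
    (((hA'.add hB').log fun x => (hABpos x).ne').max continuous_const).add continuous_const
  have hL2 : ∀ x, 2 ≤ L x := fun x => le_add_of_nonneg_left (le_max_right _ _)
  -- a monotone majorant of `L`
  set M : ℝ → ℝ := fun x => sSup (L '' Set.Icc 0 (max x 0)) with hMdef
  have hbdd : ∀ x : ℝ, BddAbove (L '' Set.Icc 0 (max x 0)) := fun x =>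
    (isCompact_Icc.image hLcont).bddAbove
  have hmemx : ∀ x : ℝ, L (max x 0) ∈ L '' Set.Icc 0 (max x 0) := fun x =>
    ⟨max x 0, ⟨le_max_right x 0, le_rfl⟩, rfl⟩
  have hM2 : ∀ x, 2 ≤ M x := fun x => le_trans (hL2 _) (le_csSup (hbdd x) (hmemx x))
  have hMmono : Monotone M := fun x y hxy =>
    csSup_le_csSup (hbdd y) ⟨_, hmemx x⟩
      (Set.image_mono  (Set.Icc_subset_Icc le_rfl (max_le_max hxy le_rfl)))
  have hML : ∀ x, 0 ≤ x → L x ≤ M x := fun x hx =>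
    le_csSup (hbdd x) ⟨x, ⟨hx, le_max_left x 0⟩, rfl⟩
  -- cut it off below `r₀ + 2`
  set N : ℝ → ℝ := fun s => if s < r₀ + 2 then 0 else M s with hNdef
  have hNmono : Monotone N := by
    intro s t hst
    simp only [hNdef]
    split_ifs with h1 h2 h2
    · exact le_rfl
    · exact le_trans (by norm_num) (hM2 t)
    · linarith
    · exact hMmono hst
  have hNnonneg : ∀ s, 0 ≤ N s := by
    intro s; simp only [hNdef]; split_ifs with h
    · exact le_rfl
    · exact le_trans (by norm_num) (hM2 s)
  have hNM : ∀ s, r₀ + 2 ≤ s → N s = M s := fun s hs => if_neg (not_lt.2 hs)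
  have hN0 : ∀ s, s < r₀ + 2 → N s = 0 := fun s hs => if_pos hs
  have hNloc : LocallyIntegrable N volume := hNmono.locallyIntegrable
  have hNmeas : Measurable N := hNmono.measurable
  -- a smooth bump function
  obtain ⟨ψ, hψcd, hψcs, hψnn, hψone, hψsupp⟩ :
      ∃ ψ : ℝ → ℝ, ContDiff ℝ (⊤ : ℕ∞) ψ ∧ HasCompactSupport ψ ∧ (∀ t, 0 ≤ ψ t) ∧
        (∫ t, ψ t) = 1 ∧ Function.support ψ = Set.Ioo (-1 : ℝ) 1 := by
    let φ : ContDiffBump (0:ℝ) := ⟨1/2, 1, by norm_num, by norm_num⟩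
    refine ⟨φ.normed volume, φ.contDiff_normed, φ.hasCompactSupport_normed,
      fun t => φ.nonneg_normed t, φ.integral_normed, ?_⟩
    rw [φ.support_normed_eq, show φ.rOut = 1 from rfl, Real.ball_eq_Ioo]
    norm_num
  have hψint : Integrable ψ volume := hψcd.continuous.integrable_of_hasCompactSupport hψcs
  have hψball : ∀ t : ℝ, ψ t ≠ 0 → -1 < t ∧ t < 1 := by
    intro t ht
    have : t ∈ Set.Ioo (-1:ℝ) 1 := by rw [← hψsupp]; exact ht
    exact ⟨this.1, this.2⟩
  -- everything of the form `ψ t * N (x - t)` is integrable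
  have key_int : ∀ x : ℝ, Integrable (fun t => ψ t * N (x - t)) volume := by
    intro x
    refine Integrable.mono' (hψint.mul_const (N (x + 1))) ?_ ?_
    · exact (hψcd.continuous.measurable.mul
        (hNmeas.comp (measurable_const.sub measurable_id))).aestronglyMeasurable
    · refine Filter.Eventually.of_forall fun t => ?_
      by_cases ht : ψ t = 0
      · simp [ht, mul_nonneg (hψnn t) (hNnonneg (x + 1))]
      · have h1 := hψball t ht
        have h2 : N (x - t) ≤ N (x + 1) := hNmono (by linarith [h1.1])
        rw [Real.norm_eq_abs, abs_of_nonneg (mul_nonneg (hψnn t) (hNnonneg _))]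
        exact mul_le_mul_of_nonneg_left h2 (hψnn t)
  -- the smoothed (shifted) version of `N`
  set p : ℝ → ℝ := fun x =>
    MeasureTheory.convolution ψ N (ContinuousLinearMap.lsmul ℝ ℝ) volume (x + 1) with hpdef
  have hp_eq : ∀ x : ℝ, p x = ∫ t, ψ t * N (x + 1 - t) := by
    intro x
    simp only [hpdef]
    rw [MeasureTheory.convolution_def]
    simp only [ContinuousLinearMap.lsmul_apply, smul_eq_mul]
  have hpcd : ContDiff ℝ (⊤ : ℕ∞) p := by
    rw [hpdef]
    exact (hψcs.contDiff_convolution_left _ hψcd hNloc).comp (contDiff_id.add contDiff_const)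
  have hpcont : Continuous p := hpcd.continuous
  have hpmono : Monotone p := by
    intro x y hxy
    rw [hp_eq x, hp_eq y]
    refine integral_mono (key_int (x + 1)) (key_int (y + 1)) fun t => ?_
    exact mul_le_mul_of_nonneg_left (hNmono (by linarith)) (hψnn t)
  have hpN : ∀ x, N x ≤ p x := by
    intro x
    rw [hp_eq x]
    have h1 : (∫ t, ψ t * N x) = N x := by
      rw [MeasureTheory.integral_mul_const, hψone, one_mul]
    calc N x = ∫ t, ψ t * N x := h1.symm
      _ ≤ ∫ t, ψ t * N (x + 1 - t) := by
          refine integral_mono (hψint.mul_const _) (key_int (x + 1)) fun t => ?_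
          by_cases ht : ψ t = 0
          · simp [ht]
          · have h2 := hψball t ht
            exact mul_le_mul_of_nonneg_left (hNmono (by linarith)) (hψnn t)
  have hp0 : ∀ x, x ≤ r₀ → p x = 0 := by
    intro x hx
    rw [hp_eq x]
    have h0 : ∀ t, ψ t * N (x + 1 - t) = 0 := by
      intro t
      by_cases ht : ψ t = 0
      · simp [ht]
      · have h1 := hψball t ht
        rw [hN0 _ (by linarith), mul_zero]
    simp only [h0, integral_zero]
  have hppos : ∀ x, r₀ < x → 0 < p x := by
    intro x hx
    rw [hp_eq x]
    have hnn : (0 : ℝ → ℝ) ≤ fun t => ψ t * N (x + 1 - t) :=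
      fun t => mul_nonneg (hψnn t) (hNnonneg _)
    refine (integral_pos_iff_support_of_nonneg hnn (key_int (x + 1))).2 ?_
    have hcpos : (-1 : ℝ) < min 1 (x - 1 - r₀) := lt_min (by norm_num) (by linarith)
    have hsub : Set.Ioo (-1 : ℝ) (min 1 (x - 1 - r₀)) ⊆
        Function.support fun t => ψ t * N (x + 1 - t) := by
      intro t ht
      have ht1 : -1 < t := ht.1
      have ht2 : t < 1 := lt_of_lt_of_le ht.2 (min_le_left _ _)
      have ht3 : t < x - 1 - r₀ := lt_of_lt_of_le ht.2 (min_le_right _ _)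
      have hψpos : 0 < ψ t := by
        have hne : ψ t ≠ 0 := by
          rw [← Function.mem_support, hψsupp]; exact ⟨ht1, ht2⟩
        exact (hψnn t).lt_of_ne (Ne.symm hne)
      have hNpos : 0 < N (x + 1 - t) := by
        rw [hNM _ (by linarith)]
        exact lt_of_lt_of_le (by norm_num) (hM2 _)
      exact Function.mem_support.2 (ne_of_gt (mul_pos hψpos hNpos))
    calc (0:ℝ≥0∞) < volume (Set.Ioo (-1 : ℝ) (min 1 (x - 1 - r₀))) := by
          rw [Real.volume_Ioo]; exact ENNReal.ofReal_pos.2 (by linarith)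
      _ ≤ _ := measure_mono hsub
  have hpnn : ∀ s, 0 ≤ p s := by
    intro s
    rcases le_or_gt s r₀ with hs | hs
    · exact (hp0 s hs).ge
    · exact (hppos s hs).le
  have hp2 : ∀ s, r₀ + 2 ≤ s → 2 ≤ p s := by
    intro s hs
    refine le_trans (le_trans (hM2 s) (hNM s hs).ge) (hpN s)
  have hpii : ∀ a b : ℝ, IntervalIntegrable p volume a b := fun a b =>
    hpcont.intervalIntegrable a b
  -- the convex function
  set f : ℝ → ℝ := fun x => ∫ t in r₀..x, p t with hfdef
  have hderiv : deriv f = p := by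
    funext x
    rw [hfdef]
    exact Continuous.deriv_integral p hpcont r₀ x
  have hdiff : Differentiable ℝ f := by
    rw [hfdef]
    exact fun x => (HasStrictDerivAt.hasDerivAt (hpcont.integral_hasStrictDerivAt r₀ x)).differentiableAt
  have hfCD : ContDiff ℝ (⊤ : ℕ∞) f := by
    rw [contDiff_infty_iff_deriv]
    exact ⟨hdiff, by rw [hderiv]; exact hpcd⟩
  have hconv : ConvexOn ℝ Set.univ f :=
    Monotone.convexOn_univ_of_deriv hdiff (by rw [hderiv]; exact hpmono)
  have hf0 : ∀ x ≤ r₀, f x = 0 := by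
    intro x hx
    simp only [hfdef]
    have hcongr : Set.EqOn p 0 (Set.uIcc r₀ x) := by
      intro s hs
      exact hp0 s (le_trans hs.2 (sup_le le_rfl hx))
    rw [intervalIntegral.integral_congr hcongr]
    simp
  have hfnn : ∀ x, 0 ≤ f x := by
    intro x
    rcases le_or_gt x r₀ with hx | hx
    · exact (hf0 x hx).ge
    · rw [hfdef]
      exact intervalIntegral.integral_nonneg hx.le fun s _ => hpnn s
  have hsm : StrictMonoOn f (Set.Ici r₀) := by
    intro x hx y _ hxy
    have key : f y = f x + ∫ t in x..y, p t := by
      rw [hfdef]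
      exact (intervalIntegral.integral_add_adjacent_intervals (hpii r₀ x) (hpii x y)).symm
    have hpos : 0 < ∫ t in x..y, p t :=
      intervalIntegral.intervalIntegral_pos_of_pos_on (hpii x y)
        (fun s hs => hppos s (lt_of_le_of_lt hx hs.1)) hxy
    rw [key]; linarith
  have hflb : ∀ t, r₀ + 2 ≤ t → 2 * (t - (r₀ + 2)) ≤ f t := by
    intro t ht
    simp only [hfdef]
    rw [← intervalIntegral.integral_add_adjacent_intervals (hpii r₀ (r₀ + 2)) (hpii (r₀ + 2) t)]
    have h1 : (0:ℝ) ≤ ∫ u in r₀..(r₀ + 2), p u :=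
      intervalIntegral.integral_nonneg (by linarith) fun s _ => hpnn s
    have h2 : ((2:ℝ) * (t - (r₀ + 2))) ≤ ∫ u in (r₀ + 2)..t, p u := by
      have h3 := intervalIntegral.integral_mono_on (f := fun _ => (2:ℝ)) (g := p) ht
        (intervalIntegrable_const) (hpii _ _) (fun s hs => hp2 s hs.1)
      rw [intervalIntegral.integral_const, smul_eq_mul] at h3
      linarith
    linarith
  -- the pointwise lower bound on the integrand
  have hLbound : ∀ t, r₀ + 4 < t →
      (1:ℝ) ≤ f t * deriv f t / max (Real.log (A t + (deriv f t) ^ 2 * B t)) 1 := by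
    intro t ht
    have ht0 : (0:ℝ) < t := by linarith
    have hq : deriv f t = p t := by rw [hderiv]
    rw [hq]
    have hq2 : 2 ≤ p t := hp2 t (by linarith)
    have hqpos : 0 < p t := by linarith
    have hLt : L t = max (Real.log (A t + B t)) 0 + 2 := by
      simp only [hLdef, max_eq_left ht0.le]
    have hqL : L t ≤ p t :=
      le_trans (hML t ht0.le) (le_trans (hNM t (by linarith)).ge (hpN t))
    have hmax0 : max (Real.log (A t + B t)) 0 ≤ p t - 2 := by
      rw [hLt] at hqL; linarith
    have hApos : 0 < A t := hA_pos t ht0.le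
    have hBpos : 0 < B t := hB_pos t ht0.le
    have hlog : Real.log (A t + (p t) ^ 2 * B t) ≤ Real.log (A t + B t) + 2 * p t := by
      have h1 : A t + (p t) ^ 2 * B t ≤ (A t + B t) * (1 + p t) ^ 2 := by nlinarith
      have h2 : Real.log (A t + (p t) ^ 2 * B t) ≤ Real.log ((A t + B t) * (1 + p t) ^ 2) :=
        (Real.log_le_log_iff (by positivity) (by positivity)).2 h1
      have h3 : Real.log ((A t + B t) * (1 + p t) ^ 2)
          = Real.log (A t + B t) + Real.log ((1 + p t) ^ 2) :=
        Real.log_mul (by positivity) (by positivity)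
      have h4 : Real.log ((1 + p t) ^ 2) = 2 * Real.log (1 + p t) := by
        rw [Real.log_pow]; norm_num
      have h5 : Real.log (1 + p t) ≤ p t := by
        have := Real.log_le_sub_one_of_pos (show (0:ℝ) < 1 + p t by linarith)
        linarith
      linarith
    have hD : max (Real.log (A t + (p t) ^ 2 * B t)) 1 ≤ 3 * p t := by
      refine max_le ?_ (by linarith)
      have := le_max_left (Real.log (A t + B t)) 0
      linarith
    have hf3 : 3 ≤ f t := by
      have := hflb t (by linarith); linarith
    have hDpos : (0:ℝ) < max (Real.log (A t + (p t) ^ 2 * B t)) 1 :=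
      lt_of_lt_of_le one_pos (le_max_right _ _)
    rw [le_div_iff₀ hDpos, one_mul]
    calc max (Real.log (A t + (p t) ^ 2 * B t)) 1 ≤ 3 * p t := hD
      _ ≤ f t * p t := by nlinarith
  refine ⟨f, hfCD, hconv, hfnn, hf0, hsm, ?_⟩
  rw [← top_le_iff]
  calc (⊤:ℝ≥0∞) = volume (Set.Ioi (r₀ + 4)) := Real.volume_Ioi.symm
    _ = ∫⁻ t in Set.Ioi r₀,
          (Set.Ioi (r₀ + 4)).indicator (fun _ => (1:ℝ≥0∞)) t := by
        rw [lintegral_indicator measurableSet_Ioi, setLIntegral_one,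
          Measure.restrict_apply measurableSet_Ioi,
          Set.inter_eq_left.2 (Set.Ioi_subset_Ioi (by linarith))]
    _ ≤ _ := by
        refine lintegral_mono fun t => ?_
        by_cases ht : t ∈ Set.Ioi (r₀ + 4)
        · rw [Set.indicator_of_mem ht]
          exact ENNReal.one_le_ofReal.2 (hLbound t ht)
        · rw [Set.indicator_of_notMem ht]
          exact zero_le
end
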